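/- arXiv:1802.01134 — 3 statements merged into one kernel-verified Lean document; each statement's English description precedes it below -/
import Mathlib

section
/- For integers a, b, the discriminant of a·(4, 3, −7/8) + b·(−8, 0, 7/4) equals 9a² + 7(a − 2b)²; in particular it is at least 7 (indeed at least 16) whenever (a, b) ≠ (0, 0). -/
lemma aux_int (a b : ℤ) (h : ¬(a = 0 ∧ b = 0)) :
    16 ≤ 9 * a ^ 2 + 7 * (a - 2 * b) ^ 2 := by
  have hsq : ∀ x : ℤ, x ≠ 0 → 1 ≤ x ^ 2 := by
    intro x hx
    rcases lt_or_gt_of_ne hx with h' | h' <;> nlinarith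
  by_cases ha : a = 0
  · subst ha
    have hb : b ≠ 0 := by tauto
    have := hsq b hb
    nlinarith
  · by_cases hc : a - 2 * b = 0
    · have hb : b ≠ 0 := by omega
      have := hsq b hb
      have : a = 2 * b := by omega
      nlinarith [hsq b hb]
    · nlinarith [hsq a ha, hsq _ hc]

/-- The discriminant Δ(r,c,d) = c² − 2rd of a·(4,3,−7/8) + b·(−8,0,7/4) equals
    9a² + 7(a − 2b)², and is at least 7 (indeed at least 16) when (a,b) ≠ (0,0). -/
theorem discriminant_A2 (a b : ℤ) :
    ((3 * (a : ℚ)) ^ 2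
        - 2 * (4 * (a : ℚ) - 8 * b) * (-(7 / 8) * (a : ℚ) + (7 / 4) * b)
      = 9 * (a : ℚ) ^ 2 + 7 * ((a : ℚ) - 2 * b) ^ 2) ∧
    ((a, b) ≠ (0, 0) →
      7 ≤ 9 * (a : ℚ) ^ 2 + 7 * ((a : ℚ) - 2 * b) ^ 2 ∧
      16 ≤ 9 * (a : ℚ) ^ 2 + 7 * ((a : ℚ) - 2 * b) ^ 2) := by
  constructor
  · ring
  · intro h
    have h' : ¬(a = 0 ∧ b = 0) := by
      intro ⟨h1, h2⟩; exact h (by simp [h1, h2])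
    have key := aux_int a b h'
    have keyQ : (16 : ℚ) ≤ 9 * (a : ℚ) ^ 2 + 7 * ((a : ℚ) - 2 * b) ^ 2 := by
      have := (@Int.cast_le ℚ _ _ _).mpr key
      push_cast at this
      linarith
    exact ⟨by linarith, keyQ⟩
end

section
/- Let a ≥ 1 and b, c be integers with 0 ≤ b ≤ 6 and c > 0, and let α > 0 be a real number with α² = c/(16a). If b² ≥ ac and (6 − b)² ≥ ac, then α ≤ 3/4. -/
/-- If a ≥ 1, 0 ≤ b ≤ 6, c > 0, α > 0 with α² = c/(16a), b² ≥ ac and (6−b)² ≥ ac,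
    then α ≤ 3/4. -/
theorem first_wall_bound (a b c : ℤ) (α : ℝ)
    (ha : 1 ≤ a) (hb0 : 0 ≤ b) (hb6 : b ≤ 6) (hc : 0 < c) (hα : 0 < α)
    (hαsq : α ^ 2 = (c : ℝ) / (16 * (a : ℝ)))
    (h1 : a * c ≤ b ^ 2) (h2 : a * c ≤ (6 - b) ^ 2) :
    α ≤ 3 / 4 := by
  have hac : a * c ≤ 9 := by
    rcases le_or_gt b 3 with h | h
    · nlinarith
    · nlinarith
  have haR : (1 : ℝ) ≤ (a : ℝ) := by exact_mod_cast ha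
  have hacR : (a : ℝ) * c ≤ 9 := by exact_mod_cast hac
  have hcR : (0 : ℝ) < c := by exact_mod_cast hc
  have hkey : α ^ 2 * (16 * (a : ℝ)) = c := by
    rw [hαsq]; field_simp
  nlinarith [sq_nonneg (α - 3/4), sq_nonneg α, mul_pos hα hα]
end

section
/- For every real α > 0 and every decomposition (−4, 3, 7/8) = (r₁, c₁, d₁) + (r₂, c₂, d₂) with r₁ = −4a, r₂ = −4 + 4a for an integer a, such that Δ(rᵢ, cᵢ, dᵢ) ≥ 0 for i = 1, 2 and μ_α(r₁,c₁,d₁) = μ_α(r₂,c₂,d₂) with c₁, c₂ > 0: if additionally α > √5/4, then no such decomposition exists with both (rᵢ,cᵢ,dᵢ) in the lattice Λ generated by (4,3,−7/8), (−8,0,7/4), (4,1,1/8), (4,3,9/8), (4,5,25/8). -/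
def inLambda (x y z : ℚ) : Prop :=
  ∃ a₁ a₂ a₃ a₄ a₅ : ℤ,
    x = 4 * a₁ - 8 * a₂ + 4 * a₃ + 4 * a₄ + 4 * a₅ ∧
    y = 3 * a₁ + 0 * a₂ + 1 * a₃ + 3 * a₄ + 5 * a₅ ∧
    z = -(7 / 8) * a₁ + (7 / 4) * a₂ + (1 / 8) * a₃ + (9 / 8) * a₄ + (25 / 8) * a₅

lemma lambda_struct (X : ℤ) (c d : ℚ) (h : inLambda (4 * X) c d) :
    ∃ C M : ℤ, c = C ∧ 8 * d = M ∧ 2 ∣ (C - X) := by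
  obtain ⟨a₁, a₂, a₃, a₄, a₅, hx, hy, hz⟩ := h
  refine ⟨3*a₁ + a₃ + 3*a₄ + 5*a₅, -7*a₁ + 14*a₂ + a₃ + 9*a₄ + 25*a₅, ?_, ?_, ?_⟩
  · rw [hy]; push_cast; ring
  · rw [hz]; push_cast; ring
  · have hX : X = a₁ - 2*a₂ + a₃ + a₄ + a₅ := by
      have : (X : ℚ) = ((a₁ - 2*a₂ + a₃ + a₄ + a₅ : ℤ) : ℚ) := by push_cast; linarith
      exact_mod_cast this
    omega

set_option maxHeartbeats 1600000 in
/-- For α > √5/4 there is no decomposition (−4,3,7/8) = (−4a,c₁,d₁) + (−4+4a,c₂,d₂)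
    with both discriminants nonnegative, c₁, c₂ > 0, equal slopes
    μ_α(r,c,d) = (d − (α²/2)r)/c, and both characters in Λ. -/
theorem no_wall_above (α : ℝ) (hα : α > Real.sqrt 5 / 4) :
    ¬ ∃ (a : ℤ) (c₁ c₂ d₁ d₂ : ℚ),
      ((-4 * (a : ℚ)) + (-4 + 4 * (a : ℚ)) = -4 ∧ c₁ + c₂ = 3 ∧ d₁ + d₂ = 7 / 8) ∧
      (c₁ ^ 2 - 2 * (-4 * (a : ℚ)) * d₁ ≥ 0) ∧
      (c₂ ^ 2 - 2 * (-4 + 4 * (a : ℚ)) * d₂ ≥ 0) ∧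
      0 < c₁ ∧ 0 < c₂ ∧
      (((d₁ : ℝ) - α ^ 2 / 2 * (-4 * (a : ℝ))) / (c₁ : ℝ)
        = ((d₂ : ℝ) - α ^ 2 / 2 * (-4 + 4 * (a : ℝ))) / (c₂ : ℝ)) ∧
      inLambda (-4 * (a : ℚ)) c₁ d₁ ∧ inLambda (-4 + 4 * (a : ℚ)) c₂ d₂ := by
  rintro ⟨a, c₁, c₂, d₁, d₂, ⟨-, hcsum, hdsum⟩, hΔ₁, hΔ₂, hc₁pos, hc₂pos, hμ, hL₁, hL₂⟩
  -- extract integer structure from lattice membership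
  have hL₁' : inLambda (4 * ((-a : ℤ) : ℚ)) c₁ d₁ := by
    rw [show (4 * ((-a : ℤ) : ℚ)) = -4 * (a : ℚ) by push_cast; ring]; exact hL₁
  have hL₂' : inLambda (4 * ((a - 1 : ℤ) : ℚ)) c₂ d₂ := by
    rw [show (4 * ((a - 1 : ℤ) : ℚ)) = -4 + 4 * (a : ℚ) by push_cast; ring]; exact hL₂
  obtain ⟨C₁, M₁, hc₁, hd₁, hp₁⟩ := lambda_struct _ _ _ hL₁'
  obtain ⟨C₂, M₂, hc₂, hd₂, hp₂⟩ := lambda_struct _ _ _ hL₂'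
  -- basic integer facts
  have hCpos₁ : 0 < C₁ := by exact_mod_cast hc₁ ▸ hc₁pos
  have hCpos₂ : 0 < C₂ := by exact_mod_cast hc₂ ▸ hc₂pos
  have hCsum : C₁ + C₂ = 3 := by
    have : ((C₁ + C₂ : ℤ) : ℚ) = 3 := by push_cast; rw [← hc₁, ← hc₂]; exact hcsum
    exact_mod_cast this
  have hMsum : M₁ + M₂ = 7 := by
    have : ((M₁ + M₂ : ℤ) : ℚ) = 7 := by
      push_cast; rw [← hd₁, ← hd₂]; linarith
    exact_mod_cast this
  -- discriminants as integers
  have hD₁ : 0 ≤ C₁ ^ 2 + a * M₁ := by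
    have : (0 : ℚ) ≤ ((C₁ ^ 2 + a * M₁ : ℤ) : ℚ) := by
      push_cast; rw [← hc₁, ← hd₁]; nlinarith [hΔ₁]
    exact_mod_cast this
  have hD₂ : 0 ≤ C₂ ^ 2 + (1 - a) * M₂ := by
    have : (0 : ℚ) ≤ ((C₂ ^ 2 + (1 - a) * M₂ : ℤ) : ℚ) := by
      push_cast; rw [← hc₂, ← hd₂]; nlinarith [hΔ₂]
    exact_mod_cast this
  -- slope equation over ℝ
  have hc₁R : ((c₁ : ℝ)) = (C₁ : ℝ) := by exact_mod_cast congrArg (Rat.cast : ℚ → ℝ) hc₁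
  have hc₂R : ((c₂ : ℝ)) = (C₂ : ℝ) := by exact_mod_cast congrArg (Rat.cast : ℚ → ℝ) hc₂
  have hd₁R : (8 : ℝ) * (d₁ : ℝ) = (M₁ : ℝ) := by exact_mod_cast congrArg (Rat.cast : ℚ → ℝ) hd₁
  have hd₂R : (8 : ℝ) * (d₂ : ℝ) = (M₂ : ℝ) := by exact_mod_cast congrArg (Rat.cast : ℚ → ℝ) hd₂
  have hc₁Rpos : (0 : ℝ) < (c₁ : ℝ) := by exact_mod_cast hc₁pos
  have hc₂Rpos : (0 : ℝ) < (c₂ : ℝ) := by exact_mod_cast hc₂pos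
  have cross : ((d₁ : ℝ) - α ^ 2 / 2 * (-4 * (a : ℝ))) * (c₂ : ℝ)
      = ((d₂ : ℝ) - α ^ 2 / 2 * (-4 + 4 * (a : ℝ))) * (c₁ : ℝ) :=
    (div_eq_div_iff (ne_of_gt hc₁Rpos) (ne_of_gt hc₂Rpos)).mp hμ
  have key : ((C₁ * M₂ - C₂ * M₁ : ℤ) : ℝ)
      = 16 * α ^ 2 * ((a * C₂ - (1 - a) * C₁ : ℤ) : ℝ) := by
    push_cast
    rw [← hc₁R, ← hc₂R]
    nlinarith [cross, hd₁R, hd₂R]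
  have h16 : (5 : ℝ) < 16 * α ^ 2 := by
    have h5 : Real.sqrt 5 ^ 2 = 5 := Real.sq_sqrt (by norm_num)
    have h0 : 0 ≤ Real.sqrt 5 / 4 := by positivity
    nlinarith [hα]
  -- trichotomy on K
  have trich : (0 < a * C₂ - (1 - a) * C₁ ∧ 5 * (a * C₂ - (1 - a) * C₁) < C₁ * M₂ - C₂ * M₁)
      ∨ (a * C₂ - (1 - a) * C₁ = 0 ∧ C₁ * M₂ - C₂ * M₁ = 0)
      ∨ (a * C₂ - (1 - a) * C₁ < 0 ∧ C₁ * M₂ - C₂ * M₁ < 5 * (a * C₂ - (1 - a) * C₁)) := by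
    set K : ℤ := a * C₂ - (1 - a) * C₁ with hK
    set N : ℤ := C₁ * M₂ - C₂ * M₁ with hN
    rcases lt_trichotomy K 0 with h | h | h
    · refine Or.inr (Or.inr ⟨h, ?_⟩)
      have hKR : ((K : ℤ) : ℝ) < 0 := by exact_mod_cast h
      have : ((N : ℤ) : ℝ) < 5 * ((K : ℤ) : ℝ) := by nlinarith [key]
      exact_mod_cast this
    · refine Or.inr (Or.inl ⟨h, ?_⟩)
      have : ((N : ℤ) : ℝ) = 0 := by rw [key, h]; push_cast; ring
      exact_mod_cast this
    · refine Or.inl ⟨h, ?_⟩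
      have hKR : (0 : ℝ) < ((K : ℤ) : ℝ) := by exact_mod_cast h
      have : 5 * ((K : ℤ) : ℝ) < ((N : ℤ) : ℝ) := by nlinarith [key]
      exact_mod_cast this
  -- now pure integer arithmetic
  have hC1cases : C₁ = 1 ∧ C₂ = 2 ∨ C₁ = 2 ∧ C₂ = 1 := by omega
  rcases hC1cases with ⟨e₁, e₂⟩ | ⟨e₁, e₂⟩
  · -- C₁ = 1, C₂ = 2, a odd
    have haodd : 2 ∣ 1 + a := by omega
    subst e₁ e₂
    rcases trich with ⟨hKpos, hNbig⟩ | ⟨hK0, -⟩ | ⟨hKneg, hNsmall⟩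
    · -- K = 3a - 1 > 0 → a ≥ 1 ; N = M₂ - 2M₁ = 7 - 3M₁ > 5(3a-1)
      have ha1 : 1 ≤ a := by omega
      have hM1 : M₁ ≤ -2 := by omega
      nlinarith [mul_nonneg (by omega : (0:ℤ) ≤ a - 1) (by omega : (0:ℤ) ≤ -M₁), hD₁]
    · omega
    · have ha1 : a ≤ -1 := by omega
      have hM1 : 5 - 5 * a ≤ M₁ := by omega
      nlinarith [mul_nonneg (by omega : (0:ℤ) ≤ -a - 1) (by omega : (0:ℤ) ≤ M₁ - 7), hD₂]
  · -- C₁ = 2, C₂ = 1, a even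
    have haeven : 2 ∣ a := by omega
    subst e₁ e₂
    rcases trich with ⟨hKpos, hNbig⟩ | ⟨hK0, -⟩ | ⟨hKneg, hNsmall⟩
    · -- K = 3a - 2 > 0 → a ≥ 1, even → a ≥ 2
      have ha1 : 2 ≤ a := by omega
      have hM1 : M₁ ≤ -3 := by omega
      nlinarith [mul_nonneg (by omega : (0:ℤ) ≤ a - 2) (by omega : (0:ℤ) ≤ -M₁), hD₁]
    · omega
    · have ha1 : a ≤ 0 := by omega
      have hM1 : 9 - 5 * a ≤ M₁ := by omega
      nlinarith [mul_nonneg (by omega : (0:ℤ) ≤ -a) (by omega : (0:ℤ) ≤ M₁ - 7), hD₂]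
end
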